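/- Let w : ℝ → ℝ be given by w(φ) = B − A·cos(φ − ψ), where A > 0, B ∈ ℝ, and ψ ∈ [−π,π] (so ψ is a global minimum point of w on [−π,π]). Then: (a) if w(−π) ≥ w(−π/2) and w(0) ≥ w(−π/2), then ψ ∈ [−3π/4, −π/4]; (b) if w(−π) ≥ w(−π/2) ≥ w(0), then ψ ∈ [−π/4, π/4]; (c) if w(−π) ≤ w(−π/2) and w(0) ≤ w(−π/2), then ψ ∈ [π/4, 3π/4]; (d) if w(−π) ≤ w(−π/2) ≤ w(0), then ψ ∈ [3π/4, π] ∪ [−π, −3π/4]. -/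

import Mathlib

open Real Set

lemma aux_cos_ge (x : ℝ) (hx : |x| ≤ π) (h : Real.sqrt 2 / 2 ≤ Real.cos x) :
    |x| ≤ π / 4 := by
  by_contra h'
  push_neg at h'
  have hlt : Real.cos |x| < Real.cos (π / 4) :=
    Real.strictAntiOn_cos ⟨by positivity, by linarith [Real.pi_pos]⟩
      ⟨abs_nonneg x, hx⟩ h'
  rw [Real.cos_abs, Real.cos_pi_div_four] at hlt
  linarith

lemma aux_cos_le (x : ℝ) (hx : |x| ≤ π) (h : Real.cos x ≤ -(Real.sqrt 2 / 2)) :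
    3 * π / 4 ≤ |x| := by
  by_contra h'
  push_neg at h'
  have hlt : Real.cos (3 * π / 4) < Real.cos |x| :=
    Real.strictAntiOn_cos ⟨abs_nonneg x, hx⟩
      ⟨by positivity, by linarith [Real.pi_pos]⟩ h'
  have h34 : Real.cos (3 * π / 4) = -(Real.sqrt 2 / 2) := by
    rw [show 3 * π / 4 = π - π / 4 by ring, Real.cos_pi_sub, Real.cos_pi_div_four]
  rw [Real.cos_abs, h34] at hlt
  linarith

set_option maxHeartbeats 1000000 in
/-- Proposition 1 of the paper: locating a `π/2`-length interval containing
the minimizer `ψ` of the sinusoid `w(φ) = B − A·cos(φ − ψ)` from three one-bit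
comparisons of `w` at `−π`, `−π/2`, `0`. -/
theorem single_minimum_interval_determination
    (A B ψ : ℝ) (hA : 0 < A) (hψ : ψ ∈ Set.Icc (-π) π)
    (w : ℝ → ℝ) (hw : ∀ φ, w φ = B - A * Real.cos (φ - ψ)) :
    (w (-π) ≥ w (-(π / 2)) ∧ w 0 ≥ w (-(π / 2)) →
        ψ ∈ Set.Icc (-(3 * π / 4)) (-(π / 4))) ∧
    (w (-π) ≥ w (-(π / 2)) ∧ w (-(π / 2)) ≥ w 0 →
        ψ ∈ Set.Icc (-(π / 4)) (π / 4)) ∧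
    (w (-π) ≤ w (-(π / 2)) ∧ w 0 ≤ w (-(π / 2)) →
        ψ ∈ Set.Icc (π / 4) (3 * π / 4)) ∧
    (w (-π) ≤ w (-(π / 2)) ∧ w (-(π / 2)) ≤ w 0 →
        ψ ∈ Set.Icc (3 * π / 4) π ∪ Set.Icc (-π) (-(3 * π / 4))) := by
  obtain ⟨hψl, hψr⟩ := hψ
  have hπ := Real.pi_pos
  set s := Real.sqrt 2 / 2 with hs_def
  have hs2 : s ^ 2 = 1 / 2 := by
    rw [hs_def, div_pow, Real.sq_sqrt (by norm_num : (2:ℝ) ≥ 0)]; norm_num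
  have hspos : 0 < s := by positivity
  have e1 : w (-π) = B + A * Real.cos ψ := by
    rw [hw, Real.cos_sub]; simp
  have e2 : w (-(π / 2)) = B + A * Real.sin ψ := by
    rw [hw, Real.cos_sub]; simp
  have e3 : w 0 = B - A * Real.cos ψ := by
    rw [hw]; simp
  have habs : |ψ| ≤ π := abs_le.2 ⟨hψl, hψr⟩
  have hpyth := Real.sin_sq_add_cos_sq ψ
  refine ⟨?_, ?_, ?_, ?_⟩
  · rintro ⟨h1, h2⟩
    simp only [e1, e2, e3] at h1 h2
    have c1 : Real.sin ψ ≤ Real.cos ψ := by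
      have := (mul_le_mul_iff_right₀ hA).1 (by linarith : A * Real.sin ψ ≤ A * Real.cos ψ); linarith
    have c2 : Real.sin ψ ≤ -Real.cos ψ := by
      have := (mul_le_mul_iff_right₀ hA).1 (by linarith : A * Real.sin ψ ≤ A * (-Real.cos ψ)); linarith
    have hsq : 1 / 2 ≤ Real.sin ψ ^ 2 := by
      nlinarith [mul_nonneg (by linarith : (0:ℝ) ≤ Real.cos ψ - Real.sin ψ)
        (by linarith : (0:ℝ) ≤ -(Real.cos ψ + Real.sin ψ))]
    have hsneg : Real.sin ψ ≤ -s := by nlinarith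
    -- ψ < 0
    have hψneg : ψ < 0 := by
      by_contra h
      push_neg at h
      have := Real.sin_nonneg_of_nonneg_of_le_pi h hψr
      linarith
    have hx : |ψ + π / 2| ≤ π := by
      rw [abs_le]; constructor <;> linarith
    have hcx : s ≤ Real.cos (ψ + π / 2) := by
      rw [Real.cos_add_pi_div_two]; linarith
    have := aux_cos_ge _ hx hcx
    rw [abs_le] at this
    constructor <;> [linarith [this.1]; linarith [this.2]]
  · rintro ⟨h1, h2⟩
    simp only [e1, e2, e3] at h1 h2
    have c1 : Real.sin ψ ≤ Real.cos ψ := by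
      have := (mul_le_mul_iff_right₀ hA).1 (by linarith : A * Real.sin ψ ≤ A * Real.cos ψ); linarith
    have c2 : -Real.cos ψ ≤ Real.sin ψ := by
      have := (mul_le_mul_iff_right₀ hA).1 (by linarith : A * (-Real.cos ψ) ≤ A * Real.sin ψ); linarith
    have hsq : 1 / 2 ≤ Real.cos ψ ^ 2 := by
      nlinarith [mul_nonneg (by linarith : (0:ℝ) ≤ Real.cos ψ - Real.sin ψ)
        (by linarith : (0:ℝ) ≤ Real.cos ψ + Real.sin ψ)]
    have hcpos : s ≤ Real.cos ψ := by nlinarith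
    have := aux_cos_ge _ habs hcpos
    rw [abs_le] at this
    exact ⟨by linarith [this.1], this.2⟩
  · rintro ⟨h1, h2⟩
    simp only [e1, e2, e3] at h1 h2
    have c1 : Real.cos ψ ≤ Real.sin ψ := by
      have := (mul_le_mul_iff_right₀ hA).1 (by linarith : A * Real.cos ψ ≤ A * Real.sin ψ); linarith
    have c2 : -Real.cos ψ ≤ Real.sin ψ := by
      have := (mul_le_mul_iff_right₀ hA).1 (by linarith : A * (-Real.cos ψ) ≤ A * Real.sin ψ); linarith
    have hsq : 1 / 2 ≤ Real.sin ψ ^ 2 := by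
      nlinarith [mul_nonneg (by linarith : (0:ℝ) ≤ Real.sin ψ - Real.cos ψ)
        (by linarith : (0:ℝ) ≤ Real.sin ψ + Real.cos ψ)]
    have hspos' : s ≤ Real.sin ψ := by nlinarith
    have hψpos : 0 < ψ := by
      by_contra h
      push_neg at h
      have := Real.sin_nonpos_of_nonpos_of_neg_pi_le h hψl
      linarith
    have hx : |ψ - π / 2| ≤ π := by
      rw [abs_le]; constructor <;> linarith
    have hcx : s ≤ Real.cos (ψ - π / 2) := by
      rw [Real.cos_sub_pi_div_two]; linarith
    have := aux_cos_ge _ hx hcx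
    rw [abs_le] at this
    constructor <;> [linarith [this.1]; linarith [this.2]]
  · rintro ⟨h1, h2⟩
    simp only [e1, e2, e3] at h1 h2
    have c1 : Real.cos ψ ≤ Real.sin ψ := by
      have := (mul_le_mul_iff_right₀ hA).1 (by linarith : A * Real.cos ψ ≤ A * Real.sin ψ); linarith
    have c2 : Real.sin ψ ≤ -Real.cos ψ := by
      have := (mul_le_mul_iff_right₀ hA).1 (by linarith : A * Real.sin ψ ≤ A * (-Real.cos ψ)); linarith
    have hsq : 1 / 2 ≤ Real.cos ψ ^ 2 := by
      nlinarith [mul_nonneg (by linarith : (0:ℝ) ≤ Real.sin ψ - Real.cos ψ)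
        (by linarith : (0:ℝ) ≤ -(Real.sin ψ + Real.cos ψ))]
    have hc0 : Real.cos ψ ≤ 0 := by linarith
    have hcneg : Real.cos ψ ≤ -s := by nlinarith [hsq, hs2, hspos, hc0]
    have h34 := aux_cos_le _ habs hcneg
    rcases abs_cases ψ with ⟨he, _⟩ | ⟨he, _⟩
    · left; exact ⟨by linarith [he ▸ h34], hψr⟩
    · right; exact ⟨hψl, by rw [he] at h34; linarith⟩
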